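/- Let G' be a relaxed metric graph and S = [S_1, ..., S_t] a binary walk such that every S_k has length at most c and every S_k begins at a vertex of weight 1. Then the cost of the infinite expansion Δ(S) in G' is at most 2c + OPT_{G'}. -/

import Mathlib

open scoped ENNReal BigOperators

/-- Total edge length of the segment of the infinite walk `W` from index `a` to `b`. -/
noncomputable def walkLen {V : Type*} (l : V → V → ℝ≥0∞) (W : ℕ → V) (a b : ℕ) : ℝ≥0∞ :=
  ∑ i ∈ Finset.Ico a b, l (W i) (W (i + 1))

/-- The walk visits every vertex infinitely often. -/
def VisitsInfOften {V : Type*} (W : ℕ → V) : Prop :=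
  ∀ v : V, ∀ N : ℕ, ∃ a : ℕ, N ≤ a ∧ W a = v

/-- Latency of vertex `v` on infinite walk `W`: the supremum, over visits to `v`,
of the length of the sub-walk until the next visit to `v`. -/
noncomputable def latency {V : Type*} (l : V → V → ℝ≥0∞) (W : ℕ → V) (v : V) : ℝ≥0∞ :=
  ⨆ (a : ℕ) (_ : W a = v), ⨅ (b : ℕ) (_ : a < b ∧ W b = v), walkLen l W a b

/-- Cost of an infinite walk: the maximum weighted latency over all vertices. -/
noncomputable def walkCost {V : Type*} (l : V → V → ℝ≥0∞) (φ : V → ℝ≥0∞) (W : ℕ → V) : ℝ≥0∞ :=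
  ⨆ v : V, φ v * latency l W v

/-- Optimal cost over all infinite walks (complete graph) visiting all vertices
infinitely often. -/
noncomputable def OPT {V : Type*} (l : V → V → ℝ≥0∞) (φ : V → ℝ≥0∞) : ℝ≥0∞ :=
  ⨅ (W : ℕ → V) (_ : VisitsInfOften W), walkCost l φ W

lemma walkLen_add {V : Type*} (l : V → V → ℝ≥0∞) (W : ℕ → V) {a m b : ℕ}
    (h1 : a ≤ m) (h2 : m ≤ b) :
    walkLen l W a b = walkLen l W a m + walkLen l W m b :=
  (Finset.sum_Ico_consecutive _ h1 h2).symm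

lemma walkLen_triangle {V : Type*} [MetricSpace V] (W : ℕ → V) {a b : ℕ} (hab : a ≤ b) :
    edist (W a) (W b) ≤ walkLen (fun x y => edist x y) W a b := by
  induction b, hab using Nat.le_induction with
  | base => simp [walkLen]
  | succ b hab ih =>
      have h : walkLen (fun x y => edist x y) W a (b + 1)
          = walkLen (fun x y => edist x y) W a b + edist (W b) (W (b + 1)) := by
        rw [walkLen, walkLen, Finset.sum_Ico_succ_top hab]
      rw [h]
      calc edist (W a) (W (b + 1)) ≤ edist (W a) (W b) + edist (W b) (W (b + 1)) :=
            edist_triangle _ _ _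
        _ ≤ _ := add_le_add_left ih _

lemma two_edist_le_OPT {V : Type*} [MetricSpace V] [Fintype V] (φ : V → ℝ≥0∞)
    (v z : V) (hz : φ z = 1) :
    2 * edist v z ≤ OPT (fun x y => edist x y) φ := by
  rw [OPT]
  refine le_iInf fun W => le_iInf fun hW => ?_
  classical
  obtain ⟨a₀, ha₀1, ha₀⟩ := hW z 1
  obtain ⟨m, hm1, hm⟩ := hW v a₀
  set A := Nat.findGreatest (fun i => W i = z) m with hA
  have hAz : W A = z := Nat.findGreatest_spec (P := fun i => W i = z) hm1 ha₀
  have key : 2 * edist v z ≤ ⨅ (b : ℕ) (_ : A < b ∧ W b = z),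
      walkLen (fun x y => edist x y) W A b := by
    refine le_iInf fun b => le_iInf fun hb => ?_
    have hmb : m < b := by
      by_contra h
      push_neg at h
      exact Nat.findGreatest_is_greatest hb.1 h hb.2
    have hAm : A ≤ m := Nat.findGreatest_le m
    rw [walkLen_add _ _ hAm hmb.le, two_mul]
    have h1 : edist v z ≤ walkLen (fun x y => edist x y) W A m := by
      rw [edist_comm, ← hAz, ← hm]; exact walkLen_triangle W hAm
    have h2 : edist v z ≤ walkLen (fun x y => edist x y) W m b := by
      rw [← hm, ← hb.2]; exact walkLen_triangle W hmb.le
    exact add_le_add h1 h2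
  calc 2 * edist v z ≤ _ := key
    _ ≤ latency (fun x y => edist x y) W z := le_iSup₂ (f := fun a (_ : W a = z) =>
        ⨅ (b : ℕ) (_ : a < b ∧ W b = z), walkLen (fun x y => edist x y) W a b) A hAz
    _ = φ z * latency (fun x y => edist x y) W z := by rw [hz, one_mul]
    _ ≤ walkCost (fun x y => edist x y) φ W := by
        rw [walkCost]
        exact le_iSup (fun u => φ u * latency (fun x y => edist x y) W u) z

lemma walk_decomp {V : Type*} [MetricSpace V] (W : ℕ → V) (β : ℕ → ℕ)
    (hmono : Monotone β) (hstep : ∀ i, β (i + 1) ≤ β i + 1) (c D : ℝ≥0∞)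
    (hlen : ∀ a b : ℕ, a ≤ b → β b = β a → walkLen (fun x y => edist x y) W a b ≤ c)
    (hedge : ∀ i, β (i + 1) = β i + 1 → edist (W i) (W (i + 1)) ≤ D) :
    ∀ n a b, a ≤ b → β b ≤ β a + n →
      walkLen (fun x y => edist x y) W a b ≤ (n + 1 : ℕ) * c + (n : ℕ) * D := by
  intro n
  induction n with
  | zero =>
      intro a b hab hβ
      have hba : β b = β a := le_antisymm (by simpa using hβ) (hmono hab)
      simpa using hlen a b hab hba
  | succ n ih =>
      intro a b hab hβ
      by_cases h : β b ≤ β a + n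
      · calc walkLen (fun x y => edist x y) W a b ≤ (n + 1 : ℕ) * c + (n : ℕ) * D :=
              ih a b hab h
          _ ≤ _ := add_le_add
              (mul_le_mul_left (by exact_mod_cast Nat.le_succ (n + 1)) c)
              (mul_le_mul_left (by exact_mod_cast Nat.le_succ n) D)
      · push_neg at h
        have hlt : β a < β b := by omega
        classical
        set i := Nat.findGreatest (fun k => β k = β a) b with hi
        have hib : i ≤ b := Nat.findGreatest_le b
        have hia : a ≤ i := Nat.le_findGreatest (P := fun k => β k = β a) hab rfl
        have hβi : β i = β a := Nat.findGreatest_spec (P := fun k => β k = β a) hab rfl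
        have hineb : i < b := lt_of_le_of_ne hib (fun h' => by rw [h'] at hβi; omega)
        have hsucc : β (i + 1) = β i + 1 := by
          have h1 := hstep i
          have h2 : β i ≤ β (i + 1) := hmono (Nat.le_succ i)
          have h3 : ¬ (β (i + 1) = β a) :=
            Nat.findGreatest_is_greatest (P := fun k => β k = β a)
              (by rw [← hi]; omega) (by omega)
          omega
        have hs1 : walkLen (fun x y => edist x y) W a b
            = walkLen (fun x y => edist x y) W a (i + 1)
              + walkLen (fun x y => edist x y) W (i + 1) b :=
          walkLen_add _ _ (by omega) (by omega)
        have hs2 : walkLen (fun x y => edist x y) W a (i + 1)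
            = walkLen (fun x y => edist x y) W a i + edist (W i) (W (i + 1)) := by
          rw [walkLen, walkLen, Finset.sum_Ico_succ_top hia]
        rw [hs1, hs2]
        have e1 : walkLen (fun x y => edist x y) W a i ≤ c := hlen a i hia hβi
        have e2 : edist (W i) (W (i + 1)) ≤ D := hedge i hsucc
        have e3 : walkLen (fun x y => edist x y) W (i + 1) b ≤ (n + 1 : ℕ) * c + (n : ℕ) * D :=
          ih (i + 1) b (by omega) (by omega)
        calc walkLen (fun x y => edist x y) W a i + edist (W i) (W (i + 1))
              + walkLen (fun x y => edist x y) W (i + 1) b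
            ≤ c + D + ((n + 1 : ℕ) * c + (n : ℕ) * D) :=
              add_le_add (add_le_add e1 e2) e3
          _ = _ := by push_cast; ring


/-- Binary property: if every member of the binary decomposition has length at most c
and begins at a vertex of weight 1, then the cost of the expansion is at most
2c + OPT. -/
theorem binary_walk_cost_bound {V : Type*} [MetricSpace V] [Fintype V]
    (φ : V → ℝ≥0∞)
    (hpow : ∀ u : V, ∃ x : ℕ, φ u = (1/2 : ℝ≥0∞) ^ x)
    (hone : ∃ u : V, φ u = 1)
    (W : ℕ → V) (β : ℕ → ℕ) (t p : ℕ) (ht : 0 < t) (hp : 0 < p)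
    (hβ0 : β 0 = 0) (hmono : Monotone β) (hstep : ∀ i, β (i + 1) ≤ β i + 1)
    (hper : ∀ i, W (i + p) = W i ∧ β (i + p) = β i + t)
    (hbin : ∀ (u : V) (x : ℕ), φ u = (1/2 : ℝ≥0∞) ^ x →
      2 ^ x ≤ t ∧ ∀ j : ℕ, ∃! a : ℕ, W a = u ∧ j * 2 ^ x ≤ β a ∧ β a < (j + 1) * 2 ^ x)
    (c : ℝ≥0∞)
    (hlen : ∀ a b : ℕ, a ≤ b → β b = β a → walkLen (fun x y => edist x y) W a b ≤ c)
    (hstart0 : φ (W 0) = 1)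
    (hstart : ∀ i, β (i + 1) = β i + 1 → φ (W (i + 1)) = 1) :
    walkCost (fun x y => edist x y) φ W ≤ 2 * c + OPT (fun x y => edist x y) φ := by
  set Z := OPT (fun x y => edist x y) φ with hZ
  have hedge : ∀ i, β (i + 1) = β i + 1 → edist (W i) (W (i + 1)) ≤ Z / 2 := by
    intro i hi
    have h := two_edist_le_OPT φ (W i) (W (i + 1)) (hstart i hi)
    rw [mul_comm] at h
    exact (ENNReal.le_div_iff_mul_le (Or.inl two_ne_zero) (Or.inl ENNReal.ofNat_ne_top)).2 h
  rw [walkCost]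
  refine iSup_le fun v => ?_
  obtain ⟨x, hx⟩ := hpow v
  obtain ⟨h2x, huniq⟩ := hbin v x hx
  have hEpos : 0 < 2 ^ x := pow_pos two_pos x
  -- bound latency
  have hlat : latency (fun x y => edist x y) W v ≤ (2 : ℝ≥0∞) ^ x * (2 * c + Z) := by
    rw [latency]
    refine iSup₂_le fun a ha => ?_
    set j := β a / 2 ^ x with hj
    obtain ⟨b', ⟨hb'v, hb'lo, hb'hi⟩, -⟩ := huniq (j + 1)
    have hjle : j * 2 ^ x ≤ β a := Nat.div_mul_le_self _ _
    have hjlt : β a < (j + 1) * 2 ^ x := by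
      calc β a = 2 ^ x * j + β a % 2 ^ x := (Nat.div_add_mod _ _).symm
        _ < 2 ^ x * j + 2 ^ x := by
            exact Nat.add_lt_add_left (Nat.mod_lt _ hEpos) _
        _ = (j + 1) * 2 ^ x := by ring
    have hab' : a < b' := by
      by_contra hcon
      push_neg at hcon
      have := hmono hcon
      omega
    have hβb' : β b' ≤ β a + (2 * 2 ^ x - 1) := by
      have h1 : β b' + 1 ≤ (j + 2) * 2 ^ x := hb'hi
      have h2 : (j + 2) * 2 ^ x = j * 2 ^ x + 2 * 2 ^ x := by ring
      omega
    have hkey := walk_decomp W β hmono hstep c (Z / 2) hlen hedge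
      (2 * 2 ^ x - 1) a b' hab'.le hβb'
    refine le_trans (iInf₂_le b' ⟨hab', hb'v⟩) (le_trans hkey ?_)
    have hn1 : ((2 * 2 ^ x - 1 : ℕ) + 1 : ℕ) = 2 * 2 ^ x := by omega
    have hcast1 : (((2 * 2 ^ x - 1 : ℕ) + 1 : ℕ) : ℝ≥0∞) = 2 * 2 ^ x := by
      rw [hn1]; push_cast; ring
    have hcast2 : ((2 * 2 ^ x - 1 : ℕ) : ℝ≥0∞) ≤ 2 * 2 ^ x := by
      calc ((2 * 2 ^ x - 1 : ℕ) : ℝ≥0∞) ≤ ((2 * 2 ^ x : ℕ) : ℝ≥0∞) := by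
            exact_mod_cast Nat.sub_le _ _
        _ = 2 * 2 ^ x := by push_cast; ring
    have hhalf : (2 : ℝ≥0∞) * (Z / 2) = Z :=
      ENNReal.mul_div_cancel two_ne_zero ENNReal.ofNat_ne_top
    calc ((2 * 2 ^ x - 1 : ℕ) + 1 : ℕ) * c + ((2 * 2 ^ x - 1 : ℕ) : ℝ≥0∞) * (Z / 2)
        ≤ (2 * 2 ^ x) * c + (2 * 2 ^ x) * (Z / 2) := by
          rw [hcast1]; exact add_le_add le_rfl (mul_le_mul_left hcast2 _)
      _ = (2 : ℝ≥0∞) ^ x * (2 * c) + (2 : ℝ≥0∞) ^ x * (2 * (Z / 2)) := by ring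
      _ = (2 : ℝ≥0∞) ^ x * (2 * c + Z) := by rw [hhalf, mul_add]
  have hone2 : ((1 / 2 : ℝ≥0∞)) ^ x * (2 : ℝ≥0∞) ^ x = 1 := by
    rw [← mul_pow, one_div, ENNReal.inv_mul_cancel two_ne_zero ENNReal.ofNat_ne_top, one_pow]
  calc φ v * latency (fun x y => edist x y) W v
      ≤ (1 / 2 : ℝ≥0∞) ^ x * ((2 : ℝ≥0∞) ^ x * (2 * c + Z)) := by
        rw [hx]; exact mul_le_mul_right hlat _
    _ = ((1 / 2 : ℝ≥0∞) ^ x * (2 : ℝ≥0∞) ^ x) * (2 * c + Z) := (mul_assoc _ _ _).symm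
    _ = 2 * c + Z := by rw [hone2, one_mul]
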